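/- There exists a universal constant C > 0 such that for all real numbers r, L with 0 < r ≤ L, every orthogonal 3×3 real matrix Q and every b ∈ ℝ³, the Lebesgue measure of the symmetric difference C(r, L) Δ (Q C(r, L) + b) is at most C r L (|b| + L ‖Q − I‖), where C(r, L) = { x ∈ ℝ³ : 0 ≤ x₁ ≤ L, x₂² + x₃² ≤ r² }, Q C(r,L) + b = { Q x + b : x ∈ C(r, L) }, and ‖·‖ denotes the operator norm on 3×3 matrices. -/

import Mathlib

open MeasureTheory Set Matrix

/-- Euclidean norm on `ℝ³` (realized as `Fin 3 → ℝ`). -/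
noncomputable def enorm3 (x : Fin 3 → ℝ) : ℝ := Real.sqrt (∑ i, x i ^ 2)

/-- The (Euclidean) operator norm of a `3 × 3` real matrix. -/
noncomputable def opNorm3 (A : Matrix (Fin 3) (Fin 3) ℝ) : ℝ :=
  ‖(Matrix.toEuclideanCLM (𝕜 := ℝ) A : EuclideanSpace ℝ (Fin 3) →L[ℝ] EuclideanSpace ℝ (Fin 3))‖

/-- The standard solid cylinder (fibre) of radius `r` and length `L` in `ℝ³`,
with axis along the first coordinate axis. -/
def cyl (r L : ℝ) : Set (Fin 3 → ℝ) :=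
  {x | 0 ≤ x 0 ∧ x 0 ≤ L ∧ x 1 ^ 2 + x 2 ^ 2 ≤ r ^ 2}

namespace Stmt7Aux

open Pointwise

lemma enorm3_nonneg (x : Fin 3 → ℝ) : 0 ≤ enorm3 x := Real.sqrt_nonneg _

lemma sq_enorm3 (x : Fin 3 → ℝ) : enorm3 x ^ 2 = ∑ i, x i ^ 2 :=
  Real.sq_sqrt (Finset.sum_nonneg fun _ _ => sq_nonneg _)

lemma enorm3_eq_norm (x : Fin 3 → ℝ) :
    enorm3 x = ‖(WithLp.equiv 2 (Fin 3 → ℝ)).symm x‖ := by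
  rw [EuclideanSpace.norm_eq]
  simp [enorm3, sq_abs]

lemma enorm3_neg (x : Fin 3 → ℝ) : enorm3 (-x) = enorm3 x := by
  simp [enorm3]

lemma enorm3_add_le (x y : Fin 3 → ℝ) : enorm3 (x + y) ≤ enorm3 x + enorm3 y := by
  simp only [enorm3_eq_norm]
  rw [show (WithLp.equiv 2 (Fin 3 → ℝ)).symm (x + y)
      = (WithLp.equiv 2 (Fin 3 → ℝ)).symm x + (WithLp.equiv 2 (Fin 3 → ℝ)).symm y from rfl]
  exact norm_add_le _ _

lemma enorm3_mulVec_le (A : Matrix (Fin 3) (Fin 3) ℝ) (x : Fin 3 → ℝ) :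
    enorm3 (A.mulVec x) ≤ opNorm3 A * enorm3 x := by
  simp only [enorm3_eq_norm]
  have h := (Matrix.toEuclideanCLM (𝕜 := ℝ) A).le_opNorm ((WithLp.equiv 2 (Fin 3 → ℝ)).symm x)
  exact h

lemma enorm3_mulVec_orth {Q : Matrix (Fin 3) (Fin 3) ℝ} (hQ : Qᵀ * Q = 1) (z : Fin 3 → ℝ) :
    enorm3 (Q.mulVec z) = enorm3 z := by
  unfold enorm3
  congr 1
  have h1 : ∀ w : Fin 3 → ℝ, ∑ i, w i ^ 2 = w ⬝ᵥ w := by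
    intro w; simp [dotProduct, sq]
  rw [h1, h1, Matrix.dotProduct_mulVec, ← Matrix.mulVec_transpose,
    Matrix.mulVec_mulVec, hQ, Matrix.one_mulVec]

def D (ρ : ℝ) : Set (Fin 2 → ℝ) := {y | y 0 ^ 2 + y 1 ^ 2 ≤ ρ ^ 2}

lemma measurableSet_D (ρ : ℝ) : MeasurableSet (D ρ) :=
  measurableSet_le (((measurable_pi_apply 0).pow_const 2).add
    ((measurable_pi_apply 1).pow_const 2)) measurable_const

lemma D_subset_Icc : D 1 ⊆ Icc (fun _ => (-1 : ℝ)) (fun _ => 1) := by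
  intro y hy
  have h : y 0 ^ 2 + y 1 ^ 2 ≤ 1 ^ 2 := hy
  constructor <;> intro i <;> fin_cases i <;> simp <;> nlinarith [sq_nonneg (y 0), sq_nonneg (y 1)]

lemma volume_D_one_le : volume (D 1) ≤ ENNReal.ofReal 4 := by
  refine (measure_mono D_subset_Icc).trans ?_
  rw [Real.volume_Icc_pi]
  rw [Fin.prod_univ_two]
  rw [← ENNReal.ofReal_mul (by norm_num)]
  norm_num

lemma volume_D_ne_top : volume (D 1) ≠ ⊤ :=
  (lt_of_le_of_lt volume_D_one_le ENNReal.ofReal_lt_top).ne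

lemma volume_D (ρ : ℝ) (hρ : 0 < ρ) :
    volume (D ρ) = ENNReal.ofReal (ρ ^ 2) * volume (D 1) := by
  have hset : D ρ = ρ • D 1 := by
    ext y
    rw [mem_smul_set_iff_inv_smul_mem₀ hρ.ne']
    have e1 : (ρ⁻¹ • y) 0 ^ 2 + (ρ⁻¹ • y) 1 ^ 2 = (y 0 ^ 2 + y 1 ^ 2) / ρ ^ 2 := by
      simp only [Pi.smul_apply, smul_eq_mul]
      field_simp
    simp only [D, mem_setOf_eq, e1, one_pow]
    rw [div_le_one (by positivity)]
  rw [hset, Measure.addHaar_smul]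
  congr 2
  rw [abs_of_nonneg (by positivity)]
  congr 1
  simp [Module.finrank_fin_fun]

def Cg (a b ρ : ℝ) : Set (Fin 3 → ℝ) :=
  {x | a ≤ x 0 ∧ x 0 ≤ b ∧ x 1 ^ 2 + x 2 ^ 2 ≤ ρ ^ 2}

lemma measurableSet_Cg (a b ρ : ℝ) : MeasurableSet (Cg a b ρ) := by
  have : Cg a b ρ = {x : Fin 3 → ℝ | a ≤ x 0} ∩ ({x | x 0 ≤ b} ∩ {x | x 1 ^ 2 + x 2 ^ 2 ≤ ρ ^ 2}) := by
    ext x; simp only [Cg, mem_setOf_eq, mem_inter_iff]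
  rw [this]
  exact (measurableSet_le measurable_const (measurable_pi_apply 0)).inter
    ((measurableSet_le (measurable_pi_apply 0) measurable_const).inter
      (measurableSet_le (((measurable_pi_apply 1).pow_const 2).add
        ((measurable_pi_apply 2).pow_const 2)) measurable_const))

lemma Cg_eq_preimage (a b ρ : ℝ) :
    Cg a b ρ = (MeasurableEquiv.piFinSuccAbove (fun _ : Fin 3 => ℝ) 0) ⁻¹' (Icc a b ×ˢ D ρ) := by
  ext x
  simp only [Cg, mem_setOf_eq, mem_preimage, MeasurableEquiv.piFinSuccAbove_apply, mem_prod,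
    mem_Icc, D]
  constructor
  · rintro ⟨h1, h2, h3⟩
    exact ⟨⟨h1, h2⟩, h3⟩
  · rintro ⟨⟨h1, h2⟩, h3⟩
    exact ⟨h1, h2, h3⟩

lemma volume_Cg (a b ρ : ℝ) :
    volume (Cg a b ρ) = ENNReal.ofReal (b - a) * volume (D ρ) := by
  rw [Cg_eq_preimage]
  rw [(volume_preserving_piFinSuccAbove (fun _ : Fin 3 => ℝ) 0).measure_preimage
    ((measurableSet_Icc.prod (measurableSet_D ρ)).nullMeasurableSet)]
  rw [Measure.volume_eq_prod, Measure.prod_prod, Real.volume_Icc]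

lemma shell_mem {r L d : ℝ} (hr : 0 ≤ r) (hd : 0 ≤ d) {x y : Fin 3 → ℝ}
    (hx : x ∈ cyl r L) (hv : enorm3 (y - x) ≤ d) : y ∈ Cg (-d) (L + d) (r + d) := by
  obtain ⟨h0, h1, h2⟩ := hx
  set v := y - x with hvdef
  have hy : y = x + v := by simp [hvdef]
  have hsum : v 0 ^ 2 + v 1 ^ 2 + v 2 ^ 2 ≤ d ^ 2 := by
    have := sq_enorm3 v
    rw [Fin.sum_univ_three] at this
    have h3 : enorm3 v ^ 2 ≤ d ^ 2 := by
      apply pow_le_pow_left₀ (enorm3_nonneg v) hv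
    linarith
  have hv0 : v 0 ^ 2 ≤ d ^ 2 := by nlinarith [sq_nonneg (v 1), sq_nonneg (v 2)]
  have habs : -d ≤ v 0 ∧ v 0 ≤ d := by constructor <;> nlinarith
  refine ⟨?_, ?_, ?_⟩
  · rw [hy]; show -d ≤ x 0 + v 0; linarith [habs.1]
  · rw [hy]; show x 0 + v 0 ≤ L + d; linarith [habs.2]
  · rw [hy]
    show (x 1 + v 1) ^ 2 + (x 2 + v 2) ^ 2 ≤ (r + d) ^ 2
    have h12 : v 1 ^ 2 + v 2 ^ 2 ≤ d ^ 2 := by nlinarith [sq_nonneg (v 0)]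
    have cs : (x 1 * v 1 + x 2 * v 2) ^ 2 ≤ (x 1 ^ 2 + x 2 ^ 2) * (v 1 ^ 2 + v 2 ^ 2) := by
      nlinarith [sq_nonneg (x 1 * v 2 - x 2 * v 1)]
    have cs2 : (x 1 * v 1 + x 2 * v 2) ^ 2 ≤ (r * d) ^ 2 := by
      calc (x 1 * v 1 + x 2 * v 2) ^ 2 ≤ (x 1 ^ 2 + x 2 ^ 2) * (v 1 ^ 2 + v 2 ^ 2) := cs
        _ ≤ r ^ 2 * d ^ 2 := by
            apply mul_le_mul h2 h12 (by positivity) (by positivity)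
        _ = (r * d) ^ 2 := by ring
    have hcross : x 1 * v 1 + x 2 * v 2 ≤ r * d := by
      nlinarith [mul_nonneg hr hd, sq_nonneg (x 1 * v 1 + x 2 * v 2 + r * d)]
    nlinarith

lemma vol_image_rigid {Q : Matrix (Fin 3) (Fin 3) ℝ} (hdet : |Q.det| = 1) (b : Fin 3 → ℝ)
    (s : Set (Fin 3 → ℝ)) :
    volume ((fun x => Q.mulVec x + b) '' s) = volume s := by
  have h1 : (fun x => Q.mulVec x + b) '' s = (fun x => x + b) '' ((Matrix.toLin' Q) '' s) := by
    rw [← Set.image_comp]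
    congr 1
  rw [h1, Set.image_add_right, measure_preimage_add_right]
  rw [Measure.addHaar_image_linearMap]
  rw [LinearMap.det_toLin', hdet]
  simp

end Stmt7Aux

open Stmt7Aux

/-- Change of a fibre under a small rigid motion: a universal constant `C > 0` such that
for `0 < r ≤ L`, any orthogonal `Q` and any `b ∈ ℝ³`, the Lebesgue measure of
`C(r,L) Δ (Q C(r,L) + b)` is at most `C r L (|b| + L ‖Q − I‖)`. -/
theorem stmt_7 :
    ∃ C : ℝ, 0 < C ∧
      ∀ (r L : ℝ), 0 < r → r ≤ L →
        ∀ Q : Matrix (Fin 3) (Fin 3) ℝ, Qᵀ * Q = 1 →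
          ∀ b : Fin 3 → ℝ,
            volume (symmDiff (cyl r L) ((fun x => Q.mulVec x + b) '' cyl r L)) ≤
              ENNReal.ofReal (C * r * L * (enorm3 b + L * opNorm3 (Q - 1))) := by
  refine ⟨176, by norm_num, ?_⟩
  intro r L hr hrL Q hQ b
  have hL : 0 < L := hr.trans_le hrL
  set nb := enorm3 b with hnbdef
  set no := opNorm3 (Q - 1) with hnodef
  have hnb : 0 ≤ nb := enorm3_nonneg b
  have hno : 0 ≤ no := norm_nonneg _
  set δ := nb + L * no with hδdef
  set d := nb + 2 * L * no with hddef
  have hδ0 : 0 ≤ δ := by positivity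
  have hd0 : 0 ≤ d := by positivity
  have hdδ : d ≤ 2 * δ := by simp only [hδdef, hddef]; nlinarith
  set φ := fun x => Q.mulVec x + b with hφdef
  have hQQT : Q * Qᵀ = 1 := mul_eq_one_comm.mp hQ
  have hdet : |Q.det| = 1 := by
    have h1 : Q.det * Q.det = 1 := by
      have := congrArg Matrix.det hQ
      rwa [Matrix.det_mul, Matrix.det_transpose, Matrix.det_one] at this
    rcases mul_self_eq_one_iff.mp h1 with h | h <;> rw [h] <;> norm_num
  -- displacement bound
  have key : ∀ y : Fin 3 → ℝ, y ∈ cyl r L → enorm3 ((Q - 1).mulVec y + b) ≤ d := by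
    intro y hy
    obtain ⟨h0, h1, h2⟩ := hy
    have hylen : enorm3 y ≤ 2 * L := by
      have hs : ∑ i, y i ^ 2 ≤ (2 * L) ^ 2 := by
        rw [Fin.sum_univ_three]
        nlinarith
      calc enorm3 y = Real.sqrt (∑ i, y i ^ 2) := rfl
        _ ≤ Real.sqrt ((2 * L) ^ 2) := Real.sqrt_le_sqrt hs
        _ = 2 * L := Real.sqrt_sq (by positivity)
    calc enorm3 ((Q - 1).mulVec y + b) ≤ enorm3 ((Q - 1).mulVec y) + enorm3 b :=
          enorm3_add_le _ _
      _ ≤ no * (2 * L) + nb := by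
          refine add_le_add ?_ le_rfl
          exact (enorm3_mulVec_le _ _).trans (mul_le_mul_of_nonneg_left hylen hno)
      _ = d := by rw [hddef]; ring
  -- forward inclusion
  set B := Cg (-d) (L + d) (r + d) with hBdef
  have hfwd : φ '' cyl r L ⊆ B := by
    rintro _ ⟨x, hx, rfl⟩
    have hdisp : enorm3 (φ x - x) ≤ d := by
      have e : φ x - x = (Q - 1).mulVec x + b := by
        simp only [hφdef]
        rw [Matrix.sub_mulVec, Matrix.one_mulVec]
        ring
      rw [e]; exact key x hx
    exact shell_mem hr.le hd0 hx hdisp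
  have hAB : cyl r L ⊆ B := by
    intro x hx
    obtain ⟨h0, h1, h2⟩ := hx
    refine ⟨by linarith, by linarith, ?_⟩
    nlinarith
  -- backward inclusion
  have hbwd : cyl r L \ (φ '' cyl r L) ⊆ φ '' (B \ cyl r L) := by
    rintro y ⟨hyA, hyn⟩
    set x := Qᵀ.mulVec (y - b) with hxdef
    have hφx : φ x = y := by
      simp only [hφdef, hxdef]
      rw [Matrix.mulVec_mulVec, hQQT, Matrix.one_mulVec]
      ring
    have hdisp : enorm3 (x - y) ≤ d := by
      have e1 : x - y = Qᵀ.mulVec (-((Q - 1).mulVec y + b)) := by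
        have h2 : Qᵀ.mulVec (Q.mulVec y) = y := by
          rw [Matrix.mulVec_mulVec, hQ, Matrix.one_mulVec]
        have e2 : (-((Q - 1).mulVec y + b)) = (y - b) - Q.mulVec y := by
          rw [Matrix.sub_mulVec, Matrix.one_mulVec]
          ring
        rw [e2, Matrix.mulVec_sub, h2, hxdef]
      have horth : (Qᵀ)ᵀ * Qᵀ = 1 := by rw [Matrix.transpose_transpose, hQQT]
      rw [e1, enorm3_mulVec_orth horth, enorm3_neg]
      exact key y hyA
    have hxB : x ∈ B := shell_mem hr.le hd0 hyA hdisp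
    have hxnA : x ∉ cyl r L := fun h => hyn ⟨x, h, hφx⟩
    exact ⟨x, ⟨hxB, hxnA⟩, hφx⟩
  -- volumes
  have volA : volume (cyl r L) = ENNReal.ofReal L * volume (D r) := by
    have e : cyl r L = Cg 0 L r := rfl
    rw [e, volume_Cg, sub_zero]
  have volAfin : volume (cyl r L) ≠ ⊤ := by
    rw [volA, volume_D r hr]
    exact ENNReal.mul_ne_top ENNReal.ofReal_ne_top
      (ENNReal.mul_ne_top ENNReal.ofReal_ne_top volume_D_ne_top)
  have volB : volume B = ENNReal.ofReal (L + 2 * d) * volume (D (r + d)) := by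
    rw [hBdef, volume_Cg]
    congr 2
    ring
  have hsymm : volume (symmDiff (cyl r L) (φ '' cyl r L)) ≤
      volume (cyl r L \ (φ '' cyl r L)) + volume ((φ '' cyl r L) \ cyl r L) := by
    rw [Set.symmDiff_def]
    exact measure_union_le _ _
  by_cases hcase : d ≤ r
  · -- small-displacement case
    have hBA : volume (B \ cyl r L) ≤ ENNReal.ofReal (44 * (r * L * d)) := by
      rw [measure_diff hAB (measurableSet_Cg 0 L r).nullMeasurableSet volAfin]
      rw [tsub_le_iff_right]
      rw [volA, volB, volume_D r hr, volume_D (r + d) (by linarith)]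
      have hpoly : (L + 2 * d) * (r + d) ^ 2 ≤ L * r ^ 2 + 11 * (r * L * d) := by
        have hdL : d ≤ L := hcase.trans hrL
        have e1 : L * d ^ 2 ≤ r * L * d := by
          nlinarith [mul_nonneg (mul_nonneg hL.le hd0) (sub_nonneg.2 hcase)]
        have e2 : d * r ^ 2 ≤ r * L * d := by
          nlinarith [mul_nonneg (mul_nonneg hd0 hr.le) (sub_nonneg.2 hrL)]
        have e3 : r * d ^ 2 ≤ r * L * d := by
          nlinarith [mul_nonneg (mul_nonneg hr.le hd0) (sub_nonneg.2 hdL)]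
        have e4 : d ^ 3 ≤ r * L * d := by
          nlinarith [mul_nonneg (mul_nonneg hd0 hd0) (sub_nonneg.2 hcase),
            mul_nonneg (mul_nonneg hd0 hr.le) (sub_nonneg.2 hdL)]
        nlinarith
      have e : ENNReal.ofReal (L * r ^ 2) * volume (D 1)
          = ENNReal.ofReal L * (ENNReal.ofReal (r ^ 2) * volume (D 1)) := by
        rw [ENNReal.ofReal_mul hL.le, mul_assoc]
      have htail : ENNReal.ofReal (11 * (r * L * d)) * volume (D 1)
          ≤ ENNReal.ofReal (44 * (r * L * d)) := by
        calc ENNReal.ofReal (11 * (r * L * d)) * volume (D 1)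
            ≤ ENNReal.ofReal (11 * (r * L * d)) * ENNReal.ofReal 4 :=
              mul_le_mul_right volume_D_one_le _
          _ = ENNReal.ofReal (44 * (r * L * d)) := by
              rw [← ENNReal.ofReal_mul (by positivity)]
              congr 1
              ring
      calc ENNReal.ofReal (L + 2 * d) * (ENNReal.ofReal ((r + d) ^ 2) * volume (D 1))
          = ENNReal.ofReal ((L + 2 * d) * (r + d) ^ 2) * volume (D 1) := by
            rw [ENNReal.ofReal_mul (by linarith), mul_assoc]
        _ ≤ (ENNReal.ofReal (L * r ^ 2) + ENNReal.ofReal (11 * (r * L * d))) * volume (D 1) := by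
            refine mul_le_mul_left ?_ _
            rw [← ENNReal.ofReal_add (by positivity) (by positivity)]
            exact ENNReal.ofReal_le_ofReal hpoly
        _ = ENNReal.ofReal (L * r ^ 2) * volume (D 1)
            + ENNReal.ofReal (11 * (r * L * d)) * volume (D 1) := add_mul _ _ _
        _ ≤ ENNReal.ofReal L * (ENNReal.ofReal (r ^ 2) * volume (D 1))
            + ENNReal.ofReal (44 * (r * L * d)) := add_le_add (le_of_eq e) htail
        _ = ENNReal.ofReal (44 * (r * L * d))
            + ENNReal.ofReal L * (ENNReal.ofReal (r ^ 2) * volume (D 1)) := add_comm _ _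
    have step1 : volume (cyl r L \ (φ '' cyl r L)) ≤ ENNReal.ofReal (44 * (r * L * d)) := by
      calc volume (cyl r L \ (φ '' cyl r L)) ≤ volume (φ '' (B \ cyl r L)) := measure_mono hbwd
        _ = volume (B \ cyl r L) := vol_image_rigid hdet b _
        _ ≤ _ := hBA
    have step2 : volume ((φ '' cyl r L) \ cyl r L) ≤ ENNReal.ofReal (44 * (r * L * d)) := by
      refine (measure_mono ?_).trans hBA
      exact diff_subset_diff_left hfwd
    calc volume (symmDiff (cyl r L) (φ '' cyl r L))
        ≤ volume (cyl r L \ (φ '' cyl r L)) + volume ((φ '' cyl r L) \ cyl r L) := hsymm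
      _ ≤ ENNReal.ofReal (44 * (r * L * d)) + ENNReal.ofReal (44 * (r * L * d)) :=
          add_le_add step1 step2
      _ = ENNReal.ofReal (88 * (r * L * d)) := by
          rw [← ENNReal.ofReal_add (by positivity) (by positivity)]
          congr 1
          ring
      _ ≤ ENNReal.ofReal (176 * r * L * δ) := by
          refine ENNReal.ofReal_le_ofReal ?_
          nlinarith [mul_le_mul_of_nonneg_left hdδ (mul_nonneg hr.le hL.le)]
  · -- large-displacement case
    push_neg at hcase
    have hA4 : volume (cyl r L) ≤ ENNReal.ofReal (4 * (L * r ^ 2)) := by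
      rw [volA, volume_D r hr]
      calc ENNReal.ofReal L * (ENNReal.ofReal (r ^ 2) * volume (D 1))
          ≤ ENNReal.ofReal L * (ENNReal.ofReal (r ^ 2) * ENNReal.ofReal 4) :=
            mul_le_mul_right (mul_le_mul_right volume_D_one_le _) _
        _ = ENNReal.ofReal (4 * (L * r ^ 2)) := by
            rw [← ENNReal.ofReal_mul (by positivity), ← ENNReal.ofReal_mul (by positivity)]
            congr 1
            ring
    calc volume (symmDiff (cyl r L) (φ '' cyl r L))
        ≤ volume (cyl r L \ (φ '' cyl r L)) + volume ((φ '' cyl r L) \ cyl r L) := hsymm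
      _ ≤ volume (cyl r L) + volume (φ '' cyl r L) :=
          add_le_add (measure_mono diff_subset) (measure_mono diff_subset)
      _ = volume (cyl r L) + volume (cyl r L) := by rw [vol_image_rigid hdet b]
      _ ≤ ENNReal.ofReal (4 * (L * r ^ 2)) + ENNReal.ofReal (4 * (L * r ^ 2)) :=
          add_le_add hA4 hA4
      _ = ENNReal.ofReal (8 * (L * r ^ 2)) := by
          rw [← ENNReal.ofReal_add (by positivity) (by positivity)]
          congr 1
          ring
      _ ≤ ENNReal.ofReal (176 * r * L * δ) := by
          refine ENNReal.ofReal_le_ofReal ?_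
          nlinarith [mul_le_mul_of_nonneg_left (hcase.le.trans hdδ) (mul_nonneg hL.le hr.le),
            mul_nonneg (mul_nonneg hr.le hL.le) hδ0]
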